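/- Let N ≥ 2. Every b ∈ B_sp^+ with first entry b_1 = + is of the form ẽ_{l_1} ẽ_{l_2} ⋯ ẽ_{l_p}(+,…,+) for some p ≥ 0 and l_1,…,l_p ∈ {2,…,N} (i.e., b is reachable from the constant sequence (+,…,+) using only the operators ẽ_l with l ≥ 2). -/

import Mathlib

namespace CrystalPaper

/-- A sign sequence of length `N`: `true` codes `+`, `false` codes `−`. -/
abbrev Seq (N : ℕ) := Fin N → Bool

/-- The constant sequence `(+,…,+)`. -/
def top (N : ℕ) : Seq N := fun _ => true

/-- The constant sequence `(−,…,−)`. -/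
def bot (N : ℕ) : Seq N := fun _ => false

/-- The sequence `(+^k, −^{N−k})` (first `k` entries `+`, the rest `−`). -/
def lowSeq (N k : ℕ) : Seq N := fun i => decide ((i : ℕ) < k)

/-- The number of `−` entries of a sign sequence. -/
def minusCount (N : ℕ) (b : Seq N) : ℕ :=
  (Finset.univ.filter (fun i => b i = false)).card

/-- `B_sp^+`: sign sequences with an even number of `−` entries. -/
def BspPlus (N : ℕ) (b : Seq N) : Prop := Even (minusCount N b)

/-- `B_sp^−`: sign sequences with an odd number of `−` entries. -/
def BspMinus (N : ℕ) (b : Seq N) : Prop := Odd (minusCount N b)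

/-- The type-`D_N` Kashiwara raising operator `ẽ_l`, labels `1 ≤ l ≤ N`
(`none` codes `0`).  For `1 ≤ l ≤ N−1` it replaces `(b_l, b_{l+1}) = (+,−)` by `(−,+)`;
`ẽ_N` replaces `(b_{N−1}, b_N) = (+,+)` by `(−,−)`. -/
def eD (N l : ℕ) (b : Seq N) : Option (Seq N) :=
  if h : 1 ≤ l ∧ l + 1 ≤ N then
    let i : Fin N := ⟨l - 1, by omega⟩
    let j : Fin N := ⟨l, by omega⟩
    if b i = true ∧ b j = false then
      some (Function.update (Function.update b i false) j true)
    else none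
  else if h2 : l = N ∧ 2 ≤ N then
    let i : Fin N := ⟨N - 2, by omega⟩
    let j : Fin N := ⟨N - 1, by omega⟩
    if b i = true ∧ b j = true then
      some (Function.update (Function.update b i false) j false)
    else none
  else none

/-- The type-`D_N` Kashiwara lowering operator `f̃_l`, labels `1 ≤ l ≤ N`.
For `1 ≤ l ≤ N−1` it replaces `(b_l, b_{l+1}) = (−,+)` by `(+,−)`;
`f̃_N` replaces `(b_{N−1}, b_N) = (−,−)` by `(+,+)`. -/
def fD (N l : ℕ) (b : Seq N) : Option (Seq N) :=
  if h : 1 ≤ l ∧ l + 1 ≤ N then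
    let i : Fin N := ⟨l - 1, by omega⟩
    let j : Fin N := ⟨l, by omega⟩
    if b i = false ∧ b j = true then
      some (Function.update (Function.update b i true) j false)
    else none
  else if h2 : l = N ∧ 2 ≤ N then
    let i : Fin N := ⟨N - 2, by omega⟩
    let j : Fin N := ⟨N - 1, by omega⟩
    if b i = false ∧ b j = false then
      some (Function.update (Function.update b i true) j true)
    else none
  else none

/-- Weight measure: sum of `N - i` over minus positions. -/
def mW (N : ℕ) (b : Seq N) : ℕ := ∑ k : Fin N, (if b k then 0 else N - (k : ℕ))

lemma comp_update₂ {N : ℕ} (b : Seq N) (i j : Fin N) (x y : Bool) (c : Fin N → Bool → ℕ) :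
    (fun k => c k (Function.update (Function.update b i x) j y k))
      = Function.update (Function.update (fun k => c k (b k)) i (c i x)) j (c j y) := by
  funext k
  by_cases h1 : k = j
  · subst h1; simp
  · by_cases h2 : k = i
    · subst h2; simp [Function.update_of_ne h1]
    · simp [Function.update_of_ne h1, Function.update_of_ne h2]

lemma sum_flip {N : ℕ} (b : Seq N) (i j : Fin N) (hij : i ≠ j) (x y : Bool)
    (c : Fin N → Bool → ℕ) :
    (∑ k, c k (Function.update (Function.update b i x) j y k)) + c i (b i) + c j (b j)
      = (∑ k, c k (b k)) + c i x + c j y := by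
  have h := comp_update₂ b i j x y c
  have h1 : (∑ k, c k (Function.update (Function.update b i x) j y k))
      = ∑ k, Function.update (Function.update (fun k => c k (b k)) i (c i x)) j (c j y) k :=
    Finset.sum_congr rfl fun k _ => congrFun h k
  have hi' : i ∈ Finset.univ \ {j} := Finset.mem_sdiff.mpr ⟨Finset.mem_univ i, by simp [hij]⟩
  rw [h1, Finset.sum_update_of_mem (Finset.mem_univ j), Finset.sum_update_of_mem hi']
  rw [Finset.sum_eq_add_sum_sdiff_singleton_of_mem (Finset.mem_univ j) (fun k => c k (b k)),
    Finset.sum_eq_add_sum_sdiff_singleton_of_mem hi' (fun k => c k (b k))]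
  ring

lemma update_update_restore {N : ℕ} (b : Seq N) (i j : Fin N) (hij : i ≠ j) (x y : Bool) :
    Function.update (Function.update (Function.update (Function.update b i x) j y) i (b i))
      j (b j) = b := by
  funext k
  by_cases h1 : k = j
  · subst h1; simp
  · by_cases h2 : k = i
    · subst h2; simp [Function.update_of_ne h1, Function.update_of_ne hij]
    · simp [Function.update_of_ne h1, Function.update_of_ne h2]

lemma eD_lt {N l : ℕ} (h1 : 1 ≤ l) (h2 : l + 1 ≤ N) (b : Seq N)
    (hi : b ⟨l - 1, by omega⟩ = true) (hj : b ⟨l, by omega⟩ = false) :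
    eD N l b = some (Function.update (Function.update b ⟨l - 1, by omega⟩ false)
      ⟨l, by omega⟩ true) := by
  unfold eD
  rw [dif_pos ⟨h1, h2⟩, if_pos ⟨hi, hj⟩]

lemma eD_top {N : ℕ} (h2 : 2 ≤ N) (b : Seq N)
    (hi : b ⟨N - 2, by omega⟩ = true) (hj : b ⟨N - 1, by omega⟩ = true) :
    eD N N b = some (Function.update (Function.update b ⟨N - 2, by omega⟩ false)
      ⟨N - 1, by omega⟩ false) := by
  unfold eD
  rw [dif_neg (by omega), dif_pos ⟨rfl, h2⟩, if_pos ⟨hi, hj⟩]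

lemma minusCount_eq_sum {N : ℕ} (b : Seq N) :
    minusCount N b = ∑ k : Fin N, (if b k then 0 else 1) := by
  unfold minusCount
  rw [Finset.card_filter]
  exact Finset.sum_congr rfl fun k _ => by cases hk : b k <;> simp [hk]

lemma exists_pred {N : ℕ} (hN : 2 ≤ N) (b : Seq N) (hb : BspPlus N b)
    (h1 : b ⟨0, Nat.lt_of_lt_of_le Nat.two_pos hN⟩ = true) (hne : b ≠ top N) :
    ∃ l b', 2 ≤ l ∧ l ≤ N ∧ eD N l b' = some b ∧ BspPlus N b' ∧
      b' ⟨0, Nat.lt_of_lt_of_le Nat.two_pos hN⟩ = true ∧ mW N b' < mW N b := by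
  obtain ⟨j0, hj0⟩ : ∃ j : Fin N, b j = false := by
    by_contra h
    push_neg at h
    exact hne (funext fun k => by
      have := h k
      revert this; cases b k <;> simp [top])
  by_cases hcase : ∃ j : ℕ, ∃ h : j + 1 < N, b ⟨j, by omega⟩ = false ∧ b ⟨j + 1, h⟩ = true
  · obtain ⟨j, hjN, hbj, hbj1⟩ := hcase
    have hj1 : 1 ≤ j := by
      rcases Nat.eq_zero_or_pos j with h0 | h
      · exfalso; subst h0; rw [h1] at hbj; simp at hbj
      · exact h
    set i : Fin N := ⟨j, by omega⟩ with hi_def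
    set jf : Fin N := ⟨j + 1, hjN⟩ with hjf_def
    have hij : i ≠ jf := Fin.ne_of_val_ne (by simp [hi_def, hjf_def])
    have hbi : b i = false := hbj
    have hbjf : b jf = true := hbj1
    set b' := Function.update (Function.update b i true) jf false with hb'def
    have hb'i : b' i = true := by
      rw [hb'def, Function.update_of_ne hij, Function.update_self]
    have hb'j : b' jf = false := by rw [hb'def, Function.update_self]
    refine ⟨j + 1, b', by omega, by omega, ?_, ?_, ?_, ?_⟩
    · have heD : eD N (j + 1) b' = some (Function.update (Function.update b'
          ⟨j + 1 - 1, by omega⟩ false) ⟨j + 1, by omega⟩ true) :=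
        eD_lt (by omega) (by omega) b' hb'i hb'j
      rw [heD]
      congr 1
      have hres := update_update_restore b i jf hij true false
      rw [hbi, hbjf] at hres
      exact hres
    · have hc := sum_flip b i jf hij true false (fun _ v => if v then 0 else 1)
      simp only [hbi, hbjf, if_true, if_false] at hc
      have hcount : minusCount N b' + 1 = minusCount N b + 1 := by
        rw [minusCount_eq_sum, minusCount_eq_sum]
        simpa using hc
      unfold BspPlus at hb ⊢
      rw [Nat.even_iff] at hb ⊢
      omega
    · have h0i : (⟨0, by omega⟩ : Fin N) ≠ i := Fin.ne_of_val_ne (by simp [hi_def]; omega)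
      have h0j : (⟨0, by omega⟩ : Fin N) ≠ jf := Fin.ne_of_val_ne (by simp [hjf_def])
      rw [hb'def, Function.update_of_ne h0j, Function.update_of_ne h0i]
      exact h1
    · have hc := sum_flip b i jf hij true false (fun k v => if v then 0 else N - (k : ℕ))
      simp only [hbi, hbjf, if_true, if_false] at hc
      have hm : mW N b' + (N - j) = mW N b + (N - (j + 1)) := by
        rw [mW, mW]
        simpa [hi_def, hjf_def] using hc
      omega
  · have hall : ∀ (j : ℕ) (h : j + 1 < N), b ⟨j, by omega⟩ = false → b ⟨j + 1, h⟩ = false := by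
      intro j h hf
      by_contra hcc
      exact hcase ⟨j, h, hf, by revert hcc; cases b ⟨j + 1, h⟩ <;> simp⟩
    have prop : ∀ (k : ℕ) (hk : k < N), b ⟨k, hk⟩ = false →
        ∀ (m' : ℕ), k ≤ m' → ∀ (hm : m' < N), b ⟨m', hm⟩ = false := by
      intro k hk hbk m' hkm
      induction m', hkm using Nat.le_induction with
      | base => intro _; exact hbk
      | succ n hn ih => intro hm; exact hall n hm (ih (by omega))
    have hbNm1 : b ⟨N - 1, by omega⟩ = false :=
      prop j0 j0.isLt hj0 (N - 1) (Nat.le_pred_of_lt j0.isLt) (by omega)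
    have hbNm2 : b ⟨N - 2, by omega⟩ = false := by
      by_contra hc
      have hchar : ∀ i : Fin N, b i = false ↔ (i : ℕ) = N - 1 := by
        intro i
        constructor
        · intro hf
          by_contra hne'
          have hiN := i.isLt
          have := prop i i.isLt hf (N - 2) (by omega) (by omega)
          exact hc this
        · intro he
          have : i = ⟨N - 1, by omega⟩ := Fin.ext he
          rw [this]; exact hbNm1
      have hone : minusCount N b = 1 := by
        unfold minusCount
        rw [show Finset.univ.filter (fun i => b i = false) = {(⟨N - 1, by omega⟩ : Fin N)} by
          ext i; simp [hchar i, Fin.ext_iff]]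
        simp
      unfold BspPlus at hb
      rw [hone] at hb
      simp at hb
    set i : Fin N := ⟨N - 2, by omega⟩ with hi_def
    set jf : Fin N := ⟨N - 1, by omega⟩ with hjf_def
    have hij : i ≠ jf := Fin.ne_of_val_ne (by simp [hi_def, hjf_def]; omega)
    have hbi : b i = false := hbNm2
    have hbjf : b jf = false := hbNm1
    have h02 : (0 : ℕ) < N - 2 := by
      by_contra h
      push_neg at h
      have hi0 : i = ⟨0, by omega⟩ := Fin.ext (by simp [hi_def]; omega)
      rw [hi0, h1] at hbi
      simp at hbi
    set b' := Function.update (Function.update b i true) jf true with hb'def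
    have hb'i : b' i = true := by
      rw [hb'def, Function.update_of_ne hij, Function.update_self]
    have hb'j : b' jf = true := by rw [hb'def, Function.update_self]
    refine ⟨N, b', hN, le_rfl, ?_, ?_, ?_, ?_⟩
    · have heD : eD N N b' = some (Function.update (Function.update b'
          ⟨N - 2, by omega⟩ false) ⟨N - 1, by omega⟩ false) := eD_top hN b' hb'i hb'j
      rw [heD]
      congr 1
      have hres := update_update_restore b i jf hij true true
      rw [hbi, hbjf] at hres
      exact hres
    · have hc := sum_flip b i jf hij true true (fun _ v => if v then 0 else 1)
      simp only [hbi, hbjf, if_true, if_false] at hc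
      have hcount : minusCount N b' + 1 + 1 = minusCount N b := by
        rw [minusCount_eq_sum, minusCount_eq_sum]
        simpa using hc
      unfold BspPlus at hb ⊢
      rw [Nat.even_iff] at hb ⊢
      omega
    · have h0i : (⟨0, by omega⟩ : Fin N) ≠ i := Fin.ne_of_val_ne (by simp [hi_def]; omega)
      have h0j : (⟨0, by omega⟩ : Fin N) ≠ jf := Fin.ne_of_val_ne (by simp [hjf_def]; omega)
      rw [hb'def, Function.update_of_ne h0j, Function.update_of_ne h0i]
      exact h1
    · have hc := sum_flip b i jf hij true true (fun k v => if v then 0 else N - (k : ℕ))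
      simp only [hbi, hbjf, if_true, if_false] at hc
      have hm : mW N b' + (N - (N - 2)) + (N - (N - 1)) = mW N b := by
        rw [mW, mW]
        simpa [hi_def, hjf_def] using hc
      omega

/-- Every `b ∈ B_sp^+` with first entry `+` is reachable from `(+,…,+)`
using only the operators `ẽ_l` with `2 ≤ l ≤ N` (type `D_N`, `N ≥ 2`). -/
theorem BspPlus_first_plus_reachable (N : ℕ) (hN : 2 ≤ N) (b : Seq N)
    (hb : BspPlus N b) (h1 : b ⟨0, by omega⟩ = true) :
    Relation.ReflTransGen
      (fun x y => ∃ l, 2 ≤ l ∧ l ≤ N ∧ eD N l x = some y) (top N) b := by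
  have key : ∀ (n : ℕ) (b : Seq N), mW N b ≤ n → BspPlus N b → b ⟨0, by omega⟩ = true →
      Relation.ReflTransGen
        (fun x y => ∃ l, 2 ≤ l ∧ l ≤ N ∧ eD N l x = some y) (top N) b := by
    intro n
    induction n with
    | zero =>
      intro b hm _ _
      have hbt : b = top N := by
        funext k
        by_contra hk
        have hkf : b k = false := by
          revert hk; cases b k <;> simp [top]
        have hle : N - (k : ℕ) ≤ mW N b := by
          have := Finset.single_le_sum
            (f := fun k => if b k then 0 else N - (k : ℕ))
            (fun i _ => Nat.zero_le _) (Finset.mem_univ k)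
          simpa [mW, hkf] using this
        have := k.isLt
        omega
      rw [hbt]
    | succ n ih =>
      intro b hm hb h1
      by_cases htop : b = top N
      · rw [htop]
      · obtain ⟨l, b', hl2, hlN, heD, hb', h1', hlt⟩ := exists_pred hN b hb h1 htop
        exact (ih b' (by omega) hb' h1').tail ⟨l, hl2, hlN, heD⟩
  exact key (mW N b) b le_rfl hb h1

end CrystalPaper
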